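/- For a discrete random variable T on the nonnegative integers with CDF F and mean past lifetime ς*(i) = (1/F(i-1)) Σ_{m=1}^i F(m-1), the reversed hazard rate r(i) = 1 - F(i-1)/F(i) satisfies r(i) = (1 - ς*(i+1) + ς*(i))/ς*(i) for every positive integer i with F(i-1) > 0. -/

import Mathlib

open MeasureTheory Finset

theorem stmt11 {Ω : Type*} [MeasurableSpace Ω] (μ : Measure Ω) [IsProbabilityMeasure μ]
    (T : Ω → ℕ) (hT : Measurable T)
    (F : ℕ → ℝ) (hFdef : ∀ x : ℕ, F x = (μ {ω | T ω ≤ x}).toReal)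
    (ς : ℕ → ℝ) (hςdef : ∀ i : ℕ, ς i = (1 / F (i - 1)) * ∑ m ∈ Icc 1 i, F (m - 1))
    (i : ℕ) (hi : 1 ≤ i) (hF : 0 < F (i - 1)) :
    1 - F (i - 1) / F i = (1 - ς (i + 1) + ς i) / ς i := by
  have hmono : F (i - 1) ≤ F i := by
    rw [hFdef, hFdef]
    apply ENNReal.toReal_mono (measure_ne_top μ _)
    exact measure_mono fun ω hω => le_trans hω (Nat.sub_le i 1)
  have hFi : 0 < F i := lt_of_lt_of_le hF hmono
  have hFnn : ∀ m, 0 ≤ F m := fun m => by rw [hFdef]; exact ENNReal.toReal_nonneg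
  set S := ∑ m ∈ Icc 1 i, F (m - 1) with hS
  have hSpos : 0 < S := by
    have : F (i - 1) ≤ S :=
      Finset.single_le_sum (fun m _ => hFnn (m - 1)) (by simp [Finset.mem_Icc, hi])
    linarith
  have hsum : ∑ m ∈ Icc 1 (i + 1), F (m - 1) = S + F i := by
    rw [Finset.sum_Icc_succ_top (by omega : 1 ≤ i + 1)]
    simp
    exact hS.symm
  rw [hςdef, hςdef, hsum]
  have : (i + 1 - 1 : ℕ) = i := by omega
  rw [this]
  rw [← hS]
  field_simp
  ring
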